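/- Let I ⊆ ℝ be compact, let f: ℝ → ℂ be a rapidly decreasing (Schwartz) function band-limited in I, let δ > 0, and let (a_n)_{n∈ℤ} be a bounded sequence of complex numbers. Then the function g(x) = Σ_{n∈ℤ} a_n f(x − δn) is a bounded continuous function on ℝ that is band-limited in I. -/

import Mathlib

open MeasureTheory Set

noncomputable section

namespace BLAux

open Real

lemma half_le {u v : ℝ} (hu : 0 ≤ u) (h : v ≤ u + 1) : (1 + v) / 2 ≤ 1 + u := by
  rcases le_total v 1 with h1 | h1 <;> linarith

lemma w_le_of_half {u v : ℝ} (hv : 0 ≤ v) (h : (1 + v) / 2 ≤ 1 + u) :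
    ((1 + u) ^ 2)⁻¹ ≤ 4 * ((1 + v) ^ 2)⁻¹ := by
  have h0 : (0:ℝ) < (1 + v) / 2 := by linarith
  have h2 : ((1 + v) / 2) ^ 2 ≤ (1 + u) ^ 2 := pow_le_pow_left₀ h0.le h 2
  have h3 : ((1 + u) ^ 2)⁻¹ ≤ (((1 + v) / 2) ^ 2)⁻¹ := inv_anti₀ (by positivity) h2
  refine h3.trans (le_of_eq ?_)
  field_simp
  ring

lemma round_close {δ : ℝ} (hδ : 0 < δ) (x : ℝ) : |x - δ * round (x / δ)| ≤ δ / 2 := by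
  have h1 : |x / δ - round (x / δ)| ≤ 1 / 2 := abs_sub_round (x / δ)
  have he : x - δ * round (x / δ) = δ * (x / δ - round (x / δ)) := by
    field_simp
  rw [he, abs_mul, abs_of_pos hδ]
  nlinarith [abs_nonneg (x / δ - (round (x / δ) : ℝ))]

lemma round_bound {δ : ℝ} (hδ : 0 < δ) (x : ℝ) (n m : ℤ) (h2 : |x - δ * m| ≤ δ / 2) :
    (1 + δ * |((n - m : ℤ) : ℝ)|) / 2 ≤ 1 + |x - δ * n| := by
  rcases eq_or_ne n m with rfl | hne
  · simp only [sub_self, Int.cast_zero, abs_zero, mul_zero]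
    have := abs_nonneg (x - δ * n)
    linarith
  · have hge : (1:ℝ) ≤ |((n - m : ℤ) : ℝ)| := by
      have h := Int.one_le_abs (sub_ne_zero.mpr hne)
      exact_mod_cast h
    have heq : δ * |((n - m : ℤ) : ℝ)| = |(x - δ * m) - (x - δ * n)| := by
      rw [show (x - δ * m) - (x - δ * n) = δ * ((n:ℝ) - m) by ring, abs_mul, abs_of_pos hδ]
      congr 1
      push_cast
      ring
    have htri : δ * |((n - m : ℤ) : ℝ)| ≤ |x - δ * m| + |x - δ * n| := by
      rw [heq]; exact abs_sub _ _
    have hδv : δ ≤ δ * |((n - m : ℤ) : ℝ)| := by nlinarith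
    have h3 := abs_nonneg (x - δ * n)
    linarith

lemma summable_w_nat : Summable (fun n : ℕ => ((1 + (n:ℝ)) ^ 2)⁻¹) := by
  have h0 : Summable (fun n : ℕ => (((n:ℝ)) ^ 2)⁻¹) :=
    (Real.summable_nat_pow_inv).2 one_lt_two
  have h1 : Summable (fun n : ℕ => ((((n + 1 : ℕ)):ℝ) ^ 2)⁻¹) :=
    (summable_nat_add_iff 1).2 h0
  refine h1.congr fun n => ?_
  push_cast
  ring_nf

lemma summable_abs_int : Summable (fun n : ℤ => ((1 + |(n:ℝ)|) ^ 2)⁻¹) := by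
  apply Summable.of_nat_of_neg_add_one
  · refine summable_w_nat.congr fun n => ?_
    simp
  · have h2 : Summable (fun n : ℕ => ((1 + ((n:ℝ) + 1)) ^ 2)⁻¹) :=
      summable_w_nat.of_nonneg_of_le (fun n => by positivity) (fun n => by
        apply inv_anti₀ (by positivity)
        nlinarith [Nat.cast_nonneg (α := ℝ) n])
    refine h2.congr fun n => ?_
    have : |((-((n:ℤ) + 1) : ℤ) : ℝ)| = (n:ℝ) + 1 := by
      push_cast
      rw [abs_neg, _root_.abs_of_nonneg (by positivity)]
    rw [this]

lemma summable_base {δ : ℝ} (hδ : 0 < δ) :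
    Summable (fun n : ℤ => ((1 + δ * |(n:ℝ)|) ^ 2)⁻¹) := by
  set c := min 1 δ with hc
  have hc0 : 0 < c := lt_min one_pos hδ
  refine (summable_abs_int.mul_left ((c ^ 2)⁻¹)).of_nonneg_of_le
    (fun n => by positivity) fun n => ?_
  have h1 : c * (1 + |(n:ℝ)|) ≤ 1 + δ * |(n:ℝ)| := by
    have hm1 : c ≤ 1 := min_le_left 1 δ
    have hm2 : c ≤ δ := min_le_right 1 δ
    nlinarith [abs_nonneg ((n:ℝ))]
  have h2 : (c * (1 + |(n:ℝ)|)) ^ 2 ≤ (1 + δ * |(n:ℝ)|) ^ 2 :=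
    pow_le_pow_left₀ (by positivity) h1 2
  have h3 : ((1 + δ * |(n:ℝ)|) ^ 2)⁻¹ ≤ ((c * (1 + |(n:ℝ)|)) ^ 2)⁻¹ :=
    inv_anti₀ (by positivity) h2
  refine h3.trans (le_of_eq ?_)
  rw [mul_pow, mul_inv]

lemma summable_shift {δ : ℝ} (hδ : 0 < δ) (m : ℤ) :
    Summable (fun n : ℤ => ((1 + δ * |((n - m : ℤ) : ℝ)|) ^ 2)⁻¹) := by
  have h := ((Equiv.subRight m).summable_iff
    (f := fun j : ℤ => ((1 + δ * |(j:ℝ)|) ^ 2)⁻¹)).2 (summable_base hδ)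
  exact h.congr fun n => rfl

lemma tsum_shift {δ : ℝ} (m : ℤ) :
    ∑' n : ℤ, ((1 + δ * |((n - m : ℤ) : ℝ)|) ^ 2)⁻¹ =
      ∑' n : ℤ, ((1 + δ * |(n:ℝ)|) ^ 2)⁻¹ := by
  have h := Equiv.tsum_eq (Equiv.subRight m) (fun j : ℤ => ((1 + δ * |(j:ℝ)|) ^ 2)⁻¹)
  rw [← h]
  rfl

lemma w_cont : Continuous (fun t : ℝ => ((1 + |t|) ^ 2)⁻¹) :=
  ((continuous_const.add _root_.continuous_abs).pow 2).inv₀ (fun x => (show (1 + |x|) ^ 2 ≠ 0 by positivity))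

lemma w_integrable : Integrable (fun t : ℝ => ((1 + |t|) ^ 2)⁻¹) := by
  refine integrable_inv_one_add_sq.mono w_cont.aestronglyMeasurable
    (ae_of_all _ fun t => ?_)
  have h1 : ((1 + |t|) ^ 2)⁻¹ ≤ (1 + t ^ 2)⁻¹ :=
    inv_anti₀ (by positivity) (by nlinarith [abs_nonneg t, sq_abs t])
  calc ‖((1 + |t|) ^ 2)⁻¹‖ = ((1 + |t|) ^ 2)⁻¹ := Real.norm_of_nonneg (by positivity)
    _ ≤ (1 + t ^ 2)⁻¹ := h1
    _ ≤ ‖(1 + t ^ 2)⁻¹‖ := le_abs_self _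

lemma w_le_one (t : ℝ) : ((1 + |t|) ^ 2)⁻¹ ≤ 1 := by
  rw [inv_le_one_iff₀]
  right
  nlinarith [abs_nonneg t]

lemma decay2 (f : SchwartzMap ℝ ℂ) :
    ∃ C : ℝ, 0 ≤ C ∧ ∀ x : ℝ, ‖f x‖ ≤ C * ((1 + |x|) ^ 2)⁻¹ := by
  refine ⟨2 ^ 2 * (Finset.Iic (2, 0)).sup (fun m => SchwartzMap.seminorm ℝ m.1 m.2) f,
    by positivity, fun x => ?_⟩
  have h := SchwartzMap.one_add_le_sup_seminorm_apply (𝕜 := ℝ) (m := (2, 0))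
    le_rfl le_rfl f x
  rw [norm_iteratedFDeriv_zero, Real.norm_eq_abs] at h
  have hpos : (0:ℝ) < (1 + |x|) ^ 2 := by positivity
  calc ‖f x‖ = ((1 + |x|) ^ 2 * ‖f x‖) * ((1 + |x|) ^ 2)⁻¹ := by
        field_simp
    _ ≤ _ := by
        apply mul_le_mul_of_nonneg_right h (by positivity)

lemma hasTemperateGrowth_exp (c : ℝ) :
    Function.HasTemperateGrowth (fun x : ℝ => Complex.exp (((c * x : ℝ) : ℂ) * Complex.I)) := by
  have hfun : (fun x : ℝ => Complex.exp (((c * x : ℝ) : ℂ) * Complex.I)) =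
      fun x : ℝ => Complex.exp (((c : ℂ) * Complex.I) * (x : ℂ)) := by
    funext x
    push_cast
    ring_nf
  rw [hfun]
  set a : ℂ := (c : ℂ) * Complex.I with ha
  set E : ℝ → ℂ := fun x : ℝ => Complex.exp (a * (x : ℂ)) with hE
  have hd : ∀ x : ℝ, HasDerivAt E (a * E x) x := by
    intro x
    have h1 : HasDerivAt (fun x : ℝ => ((x : ℂ))) 1 x := by
      simpa using (hasDerivAt_id x).ofReal_comp
    have h2 : HasDerivAt (fun x : ℝ => a * (x : ℂ)) a x := by
      simpa using h1.const_mul a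
    have h3 := (Complex.hasDerivAt_exp (a * (x : ℂ))).comp x h2
    exact h3.congr_deriv (by simp only [hE]; ring)
  have hcont : ContDiff ℝ ((⊤ : ℕ∞) : WithTop ℕ∞) E := by
    apply Complex.contDiff_exp.comp
    exact contDiff_const.mul Complex.ofRealCLM.contDiff
  have hiter : ∀ n : ℕ, iteratedDeriv n E = fun x => a ^ n * E x := by
    intro n
    induction n with
    | zero => simp [iteratedDeriv_zero]
    | succ k ih =>
      rw [iteratedDeriv_succ, ih]
      funext x
      rw [deriv_const_mul _ ((hd x).differentiableAt), (hd x).deriv]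
      ring
  have hnorm : ∀ x : ℝ, ‖E x‖ = 1 := by
    intro x
    rw [hE]
    simp only [Complex.norm_exp]
    have : (a * (x : ℂ)).re = 0 := by
      rw [ha]
      simp [Complex.mul_re]
    rw [this, Real.exp_zero]
  refine ⟨hcont, fun n => ⟨0, ‖a‖ ^ n, fun x => ?_⟩⟩
  rw [norm_iteratedFDeriv_eq_norm_iteratedDeriv, hiter n]
  simp [norm_mul, hnorm x]

open FourierTransform in
lemma fourier_shift (g : ℝ → ℂ) (s y : ℝ) :
    FourierTransform.fourier g (y + s) =
      FourierTransform.fourier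
        (fun x => g x * Complex.exp ((((-2 * π * s) * x : ℝ) : ℂ) * Complex.I)) y := by
  rw [Real.fourier_real_eq, Real.fourier_real_eq]
  congr 1
  funext v
  simp only [Circle.smul_def, Real.fourierChar_apply, smul_eq_mul]
  rw [mul_comm (g v) (Complex.exp _), ← mul_assoc, ← Complex.exp_add]
  congr 2
  push_cast
  ring

lemma prod_w_bound {δ : ℝ} (hδ : 0 < δ) (n : ℤ) (t : ℝ) :
    ((1 + |t - δ * n|) ^ 2)⁻¹ * ((1 + |t|) ^ 2)⁻¹ ≤
      4 * ((1 + δ * |(n:ℝ)|) ^ 2)⁻¹ * (((1 + |t|) ^ 2)⁻¹ + ((1 + |t - δ * n|) ^ 2)⁻¹) := by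
  have habs : δ * |(n:ℝ)| = |δ * n| := by
    rw [abs_mul, abs_of_pos hδ]
  have htri : |δ * (n:ℝ)| ≤ |t| + |t - δ * n| := by
    calc |δ * (n:ℝ)| = |t - (t - δ * n)| := by ring_nf
      _ ≤ |t| + |t - δ * n| := abs_sub _ _
  have hw1 : (0:ℝ) ≤ ((1 + |t|) ^ 2)⁻¹ := by positivity
  have hw2 : (0:ℝ) ≤ ((1 + |t - δ * n|) ^ 2)⁻¹ := by positivity
  have hσ : (0:ℝ) ≤ 4 * ((1 + δ * |(n:ℝ)|) ^ 2)⁻¹ := by positivity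
  rcases le_total |t| |t - δ * n| with hc | hc
  · have hhalf : (1 + δ * |(n:ℝ)|) / 2 ≤ 1 + |t - δ * n| := by
      rw [habs]
      have : |δ * (n:ℝ)| ≤ 2 * |t - δ * n| := by linarith
      linarith [abs_nonneg (δ * (n:ℝ))]
    have hle : ((1 + |t - δ * n|) ^ 2)⁻¹ ≤ 4 * ((1 + δ * |(n:ℝ)|) ^ 2)⁻¹ :=
      w_le_of_half (by positivity) hhalf
    calc ((1 + |t - δ * n|) ^ 2)⁻¹ * ((1 + |t|) ^ 2)⁻¹
        ≤ (4 * ((1 + δ * |(n:ℝ)|) ^ 2)⁻¹) * ((1 + |t|) ^ 2)⁻¹ :=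
          mul_le_mul_of_nonneg_right hle hw1
      _ ≤ _ := by
          apply mul_le_mul_of_nonneg_left _ hσ
          linarith
  · have hhalf : (1 + δ * |(n:ℝ)|) / 2 ≤ 1 + |t| := by
      rw [habs]
      have : |δ * (n:ℝ)| ≤ 2 * |t| := by linarith
      linarith [abs_nonneg (δ * (n:ℝ))]
    have hle : ((1 + |t|) ^ 2)⁻¹ ≤ 4 * ((1 + δ * |(n:ℝ)|) ^ 2)⁻¹ :=
      w_le_of_half (by positivity) hhalf
    calc ((1 + |t - δ * n|) ^ 2)⁻¹ * ((1 + |t|) ^ 2)⁻¹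
        ≤ ((1 + |t - δ * n|) ^ 2)⁻¹ * (4 * ((1 + δ * |(n:ℝ)|) ^ 2)⁻¹) :=
          mul_le_mul_of_nonneg_left hle hw2
      _ ≤ _ := by
          rw [mul_comm]
          apply mul_le_mul_of_nonneg_left _ hσ
          linarith

end BLAux

/-- A function `f : ℝ → ℂ` is band-limited in `I` if its distributional Fourier transform
is supported in `I`. -/
def BandLimitedIn (I : Set ℝ) (f : ℝ → ℂ) : Prop :=
  ∀ g : SchwartzMap ℝ ℂ, Disjoint (tsupport ⇑g) I →
    ∫ t : ℝ, f t * FourierTransform.fourier (⇑g : ℝ → ℂ) t = 0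

/-- If `f` is a Schwartz function band-limited in a compact set `I`, `δ > 0` and `(a_n)` is
a bounded sequence of complex numbers, then `g(x) = Σ_{n∈ℤ} a_n f(x - δn)` is a bounded
continuous function band-limited in `I`. -/
theorem interpolation_series_bandlimited (I : Set ℝ) (hI : IsCompact I)
    (f : SchwartzMap ℝ ℂ) (hf : BandLimitedIn I ⇑f)
    (δ : ℝ) (hδ : 0 < δ) (a : ℤ → ℂ) (ha : ∃ M : ℝ, ∀ n : ℤ, ‖a n‖ ≤ M) :
    Continuous (fun x : ℝ => ∑' n : ℤ, a n * f (x - δ * n)) ∧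
    (∃ M : ℝ, ∀ x : ℝ, ‖∑' n : ℤ, a n * f (x - δ * n)‖ ≤ M) ∧
    BandLimitedIn I (fun x : ℝ => ∑' n : ℤ, a n * f (x - δ * n)) := by
  obtain ⟨C, hC0, hCf⟩ := BLAux.decay2 f
  obtain ⟨M, hM⟩ := ha
  have hM0 : 0 ≤ M := le_trans (norm_nonneg _) (hM 0)
  have hterm : ∀ (x : ℝ) (n : ℤ),
      ‖a n * f (x - δ * n)‖ ≤ M * C * ((1 + |x - δ * n|) ^ 2)⁻¹ := by
    intro x n
    rw [norm_mul]
    calc ‖a n‖ * ‖f (x - δ * n)‖ ≤ M * (C * ((1 + |x - δ * n|) ^ 2)⁻¹) :=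
          mul_le_mul (hM n) (hCf _) (norm_nonneg _) hM0
      _ = M * C * ((1 + |x - δ * n|) ^ 2)⁻¹ := by ring
  have hterm2 : ∀ (x : ℝ) (n : ℤ),
      ‖a n * f (x - δ * n)‖ ≤
        M * C * 4 * ((1 + δ * |((n - round (x / δ) : ℤ) : ℝ)|) ^ 2)⁻¹ := by
    intro x n
    refine (hterm x n).trans ?_
    have h4 := BLAux.w_le_of_half (u := |x - δ * n|)
      (v := δ * |((n - round (x / δ) : ℤ) : ℝ)|) (by positivity)
      (BLAux.round_bound hδ x n (round (x / δ)) (BLAux.round_close hδ x))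
    calc M * C * ((1 + |x - δ * n|) ^ 2)⁻¹
        ≤ M * C * (4 * ((1 + δ * |((n - round (x / δ) : ℤ) : ℝ)|) ^ 2)⁻¹) :=
          mul_le_mul_of_nonneg_left h4 (by positivity)
      _ = _ := by ring
  have hsummable : ∀ x : ℝ, Summable (fun n : ℤ => ‖a n * f (x - δ * n)‖) := fun x =>
    Summable.of_nonneg_of_le (fun n => norm_nonneg _) (hterm2 x)
      ((BLAux.summable_shift hδ (round (x / δ))).mul_left _)
  refine ⟨?_, ?_, ?_⟩
  · -- continuity
    rw [continuous_iff_continuousAt]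
    intro c
    have hc : ∀ n : ℤ, ContinuousOn (fun x : ℝ => a n * f (x - δ * n)) (Metric.ball c 1) :=
      fun n => (continuous_const.mul
        (f.continuous.comp (continuous_id.sub continuous_const))).continuousOn
    have hu : Summable (fun n : ℤ =>
        M * C * 16 * ((1 + δ * |((n - round (c / δ) : ℤ) : ℝ)|) ^ 2)⁻¹) :=
      (BLAux.summable_shift hδ (round (c / δ))).mul_left _
    have hb : ∀ (n : ℤ) (x : ℝ), x ∈ Metric.ball c 1 →
        ‖a n * f (x - δ * n)‖ ≤
          M * C * 16 * ((1 + δ * |((n - round (c / δ) : ℤ) : ℝ)|) ^ 2)⁻¹ := by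
      intro n x hx
      have hxc : |x - c| ≤ 1 := by
        rw [Metric.mem_ball, Real.dist_eq] at hx
        exact hx.le
      have h1 : |c - δ * n| ≤ |x - δ * n| + 1 := by
        have h := abs_sub_le c x (δ * n)
        rw [abs_sub_comm c x] at h
        linarith
      have h2 : ((1 + |x - δ * n|) ^ 2)⁻¹ ≤ 4 * ((1 + |c - δ * n|) ^ 2)⁻¹ :=
        BLAux.w_le_of_half (by positivity) (BLAux.half_le (abs_nonneg _) h1)
      have h3 : ((1 + |c - δ * n|) ^ 2)⁻¹ ≤
          4 * ((1 + δ * |((n - round (c / δ) : ℤ) : ℝ)|) ^ 2)⁻¹ :=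
        BLAux.w_le_of_half (by positivity)
          (BLAux.round_bound hδ c n (round (c / δ)) (BLAux.round_close hδ c))
      have h4 : ((1 + |x - δ * n|) ^ 2)⁻¹ ≤
          16 * ((1 + δ * |((n - round (c / δ) : ℤ) : ℝ)|) ^ 2)⁻¹ := by
        calc ((1 + |x - δ * n|) ^ 2)⁻¹ ≤ 4 * ((1 + |c - δ * n|) ^ 2)⁻¹ := h2
          _ ≤ 4 * (4 * ((1 + δ * |((n - round (c / δ) : ℤ) : ℝ)|) ^ 2)⁻¹) := by linarith
          _ = _ := by ring
      calc ‖a n * f (x - δ * n)‖ ≤ M * C * ((1 + |x - δ * n|) ^ 2)⁻¹ := hterm x n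
        _ ≤ M * C * (16 * ((1 + δ * |((n - round (c / δ) : ℤ) : ℝ)|) ^ 2)⁻¹) :=
            mul_le_mul_of_nonneg_left h4 (by positivity)
        _ = _ := by ring
    exact (continuousOn_tsum hc hu hb).continuousAt
      (Metric.isOpen_ball.mem_nhds (Metric.mem_ball_self one_pos))
  · -- boundedness
    refine ⟨M * C * 4 * ∑' n : ℤ, ((1 + δ * |(n:ℝ)|) ^ 2)⁻¹, fun x => ?_⟩
    have h1 := norm_tsum_le_tsum_norm (hsummable x)
    have h2 : ∑' n : ℤ, ‖a n * f (x - δ * n)‖ ≤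
        ∑' n : ℤ, M * C * 4 * ((1 + δ * |((n - round (x / δ) : ℤ) : ℝ)|) ^ 2)⁻¹ :=
      Summable.tsum_le_tsum (hterm2 x) (hsummable x)
        ((BLAux.summable_shift hδ (round (x / δ))).mul_left _)
    refine h1.trans (h2.trans (le_of_eq ?_))
    rw [tsum_mul_left, BLAux.tsum_shift]
  · -- band-limitedness
    intro g hgI
    set G : SchwartzMap ℝ ℂ := SchwartzMap.fourierTransformCLM ℝ g with hG
    have hGapp : ∀ t, G t = FourierTransform.fourier (⇑g : ℝ → ℂ) t := fun t => rfl
    obtain ⟨C', hC'0, hC'⟩ := BLAux.decay2 G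
    set F : ℤ → ℝ → ℂ :=
      fun n t => (a n * f (t - δ * n)) * FourierTransform.fourier (⇑g : ℝ → ℂ) t with hF
    have hFint : ∀ n : ℤ, Integrable (F n) := by
      intro n
      have hGint : Integrable (fun t => FourierTransform.fourier (⇑g : ℝ → ℂ) t) := by
        have h := G.integrable (μ := volume)
        exact h.congr (ae_of_all _ fun t => (hGapp t))
      refine hGint.bdd_mul (c := M * C) ?_ (ae_of_all _ fun t => ?_)
      · exact (continuous_const.mul
          (f.continuous.comp (continuous_id.sub continuous_const))).aestronglyMeasurable
      · calc ‖a n * f (t - δ * n)‖ ≤ M * C * ((1 + |t - δ * n|) ^ 2)⁻¹ := hterm t n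
          _ ≤ M * C * 1 := mul_le_mul_of_nonneg_left (BLAux.w_le_one (t - δ * n))
              (mul_nonneg hM0 hC0)
          _ = M * C := mul_one _
    set K : ℝ := ∫ t : ℝ, ((1 + |t|) ^ 2)⁻¹ with hK
    have hK0 : 0 ≤ K := integral_nonneg fun t => by positivity
    have hFnorm : ∀ (n : ℤ) (t : ℝ), ‖F n t‖ ≤
        (M * C * C' * (4 * ((1 + δ * |(n:ℝ)|) ^ 2)⁻¹)) *
          (((1 + |t|) ^ 2)⁻¹ + ((1 + |t - δ * n|) ^ 2)⁻¹) := by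
      intro n t
      have hg1 : ‖FourierTransform.fourier (⇑g : ℝ → ℂ) t‖ ≤ C' * ((1 + |t|) ^ 2)⁻¹ := by
        rw [← hGapp]
        exact hC' t
      have hstep1 : ‖F n t‖ ≤ (M * C * ((1 + |t - δ * n|) ^ 2)⁻¹) *
          (C' * ((1 + |t|) ^ 2)⁻¹) := by
        have hrfl : F n t = (a n * f (t - δ * n)) * FourierTransform.fourier (⇑g : ℝ → ℂ) t := rfl
        rw [hrfl, norm_mul]
        exact mul_le_mul (hterm t n) hg1 (norm_nonneg _) (by positivity)
      refine hstep1.trans ?_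
      have hpw := BLAux.prod_w_bound hδ n t
      calc (M * C * ((1 + |t - δ * n|) ^ 2)⁻¹) * (C' * ((1 + |t|) ^ 2)⁻¹)
          = (M * C * C') * (((1 + |t - δ * n|) ^ 2)⁻¹ * ((1 + |t|) ^ 2)⁻¹) := by ring
        _ ≤ (M * C * C') * (4 * ((1 + δ * |(n:ℝ)|) ^ 2)⁻¹ *
              (((1 + |t|) ^ 2)⁻¹ + ((1 + |t - δ * n|) ^ 2)⁻¹)) :=
            mul_le_mul_of_nonneg_left hpw (by positivity)
        _ = _ := by ring
    have hIntBound : ∀ n : ℤ, (∫ t : ℝ, ‖F n t‖) ≤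
        (M * C * C' * 4 * (K + K)) * ((1 + δ * |(n:ℝ)|) ^ 2)⁻¹ := by
      intro n
      have hint2 : Integrable (fun t : ℝ =>
          (M * C * C' * (4 * ((1 + δ * |(n:ℝ)|) ^ 2)⁻¹)) *
            (((1 + |t|) ^ 2)⁻¹ + ((1 + |t - δ * n|) ^ 2)⁻¹)) :=
        (BLAux.w_integrable.add (BLAux.w_integrable.comp_sub_right (δ * n))).const_mul _
      have hle := integral_mono_of_nonneg
        (ae_of_all _ fun t => norm_nonneg (F n t)) hint2 (ae_of_all _ (hFnorm n))
      refine hle.trans (le_of_eq ?_)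
      rw [integral_const_mul, integral_add BLAux.w_integrable
        (BLAux.w_integrable.comp_sub_right (δ * n)),
        integral_sub_right_eq_self (fun t : ℝ => ((1 + |t|) ^ 2)⁻¹) (δ * n), ← hK]
      ring
    have hSum : Summable (fun n : ℤ => ∫ t : ℝ, ‖F n t‖) :=
      Summable.of_nonneg_of_le
        (fun n => integral_nonneg fun t => norm_nonneg _) hIntBound
        ((BLAux.summable_base hδ).mul_left _)
    have hzero : ∀ n : ℤ, (∫ t : ℝ, F n t) = 0 := by
      intro n
      set ψ : SchwartzMap ℝ ℂ := SchwartzMap.bilinLeftCLM (ContinuousLinearMap.mul ℝ ℂ)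
        (BLAux.hasTemperateGrowth_exp (-2 * Real.pi * (δ * n))) g with hψdef
      have hψ : ∀ x : ℝ, ψ x =
          g x * Complex.exp ((((-2 * Real.pi * (δ * n)) * x : ℝ) : ℂ) * Complex.I) :=
        fun x => rfl
      have hsupp : tsupport ⇑ψ ⊆ tsupport ⇑g := by
        apply closure_mono
        intro x hx
        simp only [Function.mem_support] at hx ⊢
        intro h0
        exact hx (by rw [hψ x, h0, zero_mul])
      have h0 := hf ψ (hgI.mono_left hsupp)
      have hshift : ∀ y : ℝ,
          FourierTransform.fourier (⇑g : ℝ → ℂ) (y + δ * n) = FourierTransform.fourier (⇑ψ : ℝ → ℂ) y := by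
        intro y
        rw [BLAux.fourier_shift (⇑g) (δ * n) y]
        exact congrArg (fun h : ℝ → ℂ => FourierTransform.fourier h y) (funext fun x => (hψ x).symm)
      calc (∫ t : ℝ, F n t)
          = a n * ∫ t : ℝ, f (t - δ * n) * FourierTransform.fourier (⇑g : ℝ → ℂ) t := by
            rw [← integral_const_mul]
            congr 1
            funext t
            exact mul_assoc (a n) (f (t - δ * n)) (FourierTransform.fourier (⇑g : ℝ → ℂ) t)
        _ = a n * ∫ y : ℝ, f y * FourierTransform.fourier (⇑g : ℝ → ℂ) (y + δ * n) := by
            congr 1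
            rw [← integral_sub_right_eq_self
              (fun y : ℝ => (f y : ℂ) * FourierTransform.fourier (⇑g : ℝ → ℂ) (y + δ * n)) (δ * n)]
            congr 1
            funext t
            simp [sub_add_cancel]
        _ = a n * ∫ y : ℝ, f y * FourierTransform.fourier (⇑ψ : ℝ → ℂ) y := by
            congr 1
            congr 1
            funext y
            rw [hshift y]
        _ = 0 := by rw [h0, mul_zero]
    calc (∫ t : ℝ, (∑' n : ℤ, a n * f (t - δ * n)) * FourierTransform.fourier (⇑g : ℝ → ℂ) t)
        = ∫ t : ℝ, ∑' n : ℤ, F n t := by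
          congr 1
          funext t
          exact (tsum_mul_right).symm
      _ = ∑' n : ℤ, ∫ t : ℝ, F n t :=
          (integral_tsum_of_summable_integral_norm hFint hSum).symm
      _ = 0 := by simp only [hzero, tsum_zero]

end
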